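/- Let k > 0 and σ > 0. Any maximizer a* of the function ã ↦ (ã + k/σ)² ρ(ã) over the interval [0, τ*] satisfies 0 < a* < τ*; that is, neither 0 nor τ* maximizes this function on [0, τ*]. -/

import Mathlib

open Real MeasureTheory

noncomputable def gaussPdf (x : ℝ) : ℝ :=
  (Real.sqrt (2 * Real.pi))⁻¹ * Real.exp (-(x ^ 2) / 2)

noncomputable def ρ (a : ℝ) : ℝ :=
  ∫ y : ℝ, (1 / (Real.exp (2 * a * y) + 1)) ^ 2 * gaussPdf (y - a)

lemma gaussPdf_pos (x : ℝ) : 0 < gaussPdf x := by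
  unfold gaussPdf
  have := Real.pi_pos
  positivity

lemma gaussPdf_even (x : ℝ) : gaussPdf (-x) = gaussPdf x := by
  simp [gaussPdf, neg_pow]

lemma continuous_gaussPdf : Continuous gaussPdf := by
  unfold gaussPdf; fun_prop

lemma integrable_gaussPdf : Integrable gaussPdf := by
  have h : Integrable (fun x : ℝ => Real.exp (-(1/2 : ℝ) * x ^ 2)) :=
    integrable_exp_neg_mul_sq (by norm_num)
  have heq : gaussPdf = fun x : ℝ =>
      (Real.sqrt (2 * Real.pi))⁻¹ * Real.exp (-(1/2:ℝ) * x ^ 2) := by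
    funext x; unfold gaussPdf; congr 1; ring_nf
  rw [heq]
  exact h.const_mul _

noncomputable def Fint (a y : ℝ) : ℝ := ((Real.exp (2 * a * y) + 1) ^ 2)⁻¹ * gaussPdf (y - a)

lemma ρ_eq (a : ℝ) : ρ a = ∫ y : ℝ, Fint a y := by
  unfold ρ Fint
  congr 1; funext y; rw [one_div, inv_pow]

lemma continuous_Fint (a : ℝ) : Continuous (Fint a) := by
  unfold Fint
  apply Continuous.mul
  · apply Continuous.inv₀
    · fun_prop
    · intro y; positivity
  · exact continuous_gaussPdf.comp (continuous_id.sub continuous_const)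

lemma Fint_pos (a y : ℝ) : 0 < Fint a y := by
  unfold Fint
  have := gaussPdf_pos (y - a)
  positivity

lemma Fint_le (a y : ℝ) : Fint a y ≤ gaussPdf (y - a) := by
  unfold Fint
  have h1 : (1:ℝ) ≤ (Real.exp (2 * a * y) + 1) ^ 2 := by
    nlinarith [Real.exp_pos (2 * a * y)]
  have h2 := (gaussPdf_pos (y - a)).le
  calc ((Real.exp (2 * a * y) + 1) ^ 2)⁻¹ * gaussPdf (y - a)
      ≤ 1 * gaussPdf (y - a) := by
        apply mul_le_mul_of_nonneg_right _ h2
        exact inv_le_one_of_one_le₀ h1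
    _ = gaussPdf (y - a) := one_mul _

lemma integrable_Fint (a : ℝ) : Integrable (Fint a) := by
  refine (integrable_gaussPdf.comp_sub_right a).mono'
    (continuous_Fint a).aestronglyMeasurable ?_
  filter_upwards with y
  rw [Real.norm_eq_abs, abs_of_pos (Fint_pos a y)]
  exact Fint_le a y

lemma ρ_pos (a : ℝ) : 0 < ρ a := by
  rw [ρ_eq]
  rw [integral_pos_iff_support_of_nonneg (fun y => (Fint_pos a y).le) (integrable_Fint a)]
  have : Function.support (Fint a) = Set.univ := by
    ext y; simp [Function.mem_support, (Fint_pos a y).ne']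
  rw [this]
  simp

lemma ρ_neg (a : ℝ) : ρ (-a) = ρ a := by
  unfold ρ
  rw [← integral_neg_eq_self
    (fun y : ℝ => (1 / (Real.exp (2 * -a * y) + 1)) ^ 2 * gaussPdf (y - -a)) volume]
  congr 1; funext y
  have h2 : 2 * -a * -y = 2 * a * y := by ring
  have h3 : -y - -a = -(y - a) := by ring
  rw [h2, h3, gaussPdf_even]

noncomputable def Fd (a y : ℝ) : ℝ :=
  -(2 * (Real.exp (2 * a * y) + 1) ^ 1 * (Real.exp (2 * a * y) * (2 * y))) /
      ((Real.exp (2 * a * y) + 1) ^ 2) ^ 2 * gaussPdf (y - a)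
  + ((Real.exp (2 * a * y) + 1) ^ 2)⁻¹ * ((y - a) * gaussPdf (y - a))

lemma hasDerivAt_gauss_shift (y x : ℝ) :
    HasDerivAt (fun a : ℝ => gaussPdf (y - a)) ((y - x) * gaussPdf (y - x)) x := by
  have h1 : HasDerivAt (fun a : ℝ => y - a) (0 - 1) x :=
    (hasDerivAt_const x y).sub (hasDerivAt_id x)
  have h2 : HasDerivAt (fun a : ℝ => -((y - a) ^ 2) / 2) (y - x) x := by
    have := ((h1.pow 2).neg).div_const 2
    exact this.congr_deriv (by push_cast; ring)
  have h3 := (h2.exp).const_mul ((Real.sqrt (2 * Real.pi))⁻¹)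
  have heq : (fun a : ℝ => gaussPdf (y - a))
      = fun a : ℝ => (Real.sqrt (2 * Real.pi))⁻¹ * Real.exp (-((y - a) ^ 2) / 2) := by
    funext a; unfold gaussPdf; ring_nf
  rw [heq]
  exact h3.congr_deriv (by unfold gaussPdf; ring)

lemma hasDerivAt_Fint (y x : ℝ) : HasDerivAt (fun a => Fint a y) (Fd x y) x := by
  have h1 : HasDerivAt (fun a : ℝ => 2 * a * y) (2 * y) x := by
    have := (hasDerivAt_mul_const y).const_mul (2:ℝ) (x := x)
    have e : (fun a : ℝ => 2 * a * y) = fun a => 2 * (a * y) := by funext a; ring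
    rw [e]; exact this
  have h2 : HasDerivAt (fun a : ℝ => Real.exp (2 * a * y) + 1)
      (Real.exp (2 * x * y) * (2 * y)) x := h1.exp.add_const 1
  have h3 := (h2.pow 2).inv (by positivity : ((Real.exp (2 * x * y) + 1) ^ 2) ≠ 0)
  exact h3.mul (hasDerivAt_gauss_shift y x)

noncomputable def gb (A y : ℝ) : ℝ :=
  (Real.sqrt (2 * Real.pi))⁻¹ * (Real.exp (A ^ 2 / 2) * Real.exp (-(4:ℝ)⁻¹ * y ^ 2))

lemma gaussPdf_shift_le (A a y : ℝ) (ha : |a| ≤ A) : gaussPdf (y - a) ≤ gb A y := by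
  unfold gaussPdf gb
  rw [← Real.exp_add]
  apply mul_le_mul_of_nonneg_left _ (by positivity)
  apply Real.exp_le_exp.mpr
  have h1 : a ^ 2 ≤ A ^ 2 := by nlinarith [sq_abs a, abs_nonneg a]
  nlinarith [sq_nonneg (y - 2 * a)]

lemma Fd_bound (A a y : ℝ) (hA : 0 ≤ A) (ha : |a| ≤ A) :
    ‖Fd a y‖ ≤ (2 * |y| + A) * gb A y := by
  set E := Real.exp (2 * a * y) with hE
  set u := E + 1 with hu
  set g := gaussPdf (y - a) with hg
  have hEpos : 0 < E := Real.exp_pos _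
  have hupos : (1:ℝ) ≤ u := by simp [hu]; linarith
  have hgpos : 0 < g := gaussPdf_pos _
  have hkey : 4 * E ≤ u ^ 2 := by nlinarith [sq_nonneg (E - 1)]
  have habs := abs_le.mp ha
  have hterm1 : |(-(2 * u ^ 1 * (E * (2 * y))) / (u ^ 2) ^ 2 * g)| ≤ |y| * g := by
    rw [abs_mul, abs_of_pos hgpos, abs_div]
    apply mul_le_mul_of_nonneg_right _ hgpos.le
    rw [abs_of_pos (by positivity : (0:ℝ) < (u ^ 2) ^ 2), div_le_iff₀ (by positivity)]
    have hu0 : (0:ℝ) < u := by linarith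
    have : |(-(2 * u ^ 1 * (E * (2 * y))))| = 4 * E * u * |y| := by
      simp only [abs_neg, abs_mul, abs_of_pos hEpos, abs_pow, abs_of_pos hu0, abs_two]
      ring
    rw [this]
    have h4 : 4 * E * u ≤ u ^ 3 := by nlinarith [hkey, sq_nonneg u]
    have h5 : u ^ 3 ≤ u ^ 4 := by nlinarith [pow_pos hu0 3]
    nlinarith [mul_le_mul_of_nonneg_left h4 (abs_nonneg y),
      mul_le_mul_of_nonneg_left h5 (abs_nonneg y)]
  have hterm2 : |((u ^ 2)⁻¹ * ((y - a) * g))| ≤ (|y| + A) * g := by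
    rw [abs_mul, abs_mul, abs_of_pos hgpos]
    have h5 : |(u ^ 2)⁻¹| ≤ 1 := by
      rw [abs_of_pos (by positivity)]
      exact inv_le_one_of_one_le₀ (by nlinarith)
    have h6 : |y - a| ≤ |y| + A := (abs_sub _ _).trans (by linarith [abs_le.mp ha])
    calc |(u ^ 2)⁻¹| * (|y - a| * g) ≤ 1 * ((|y| + A) * g) := by
          apply mul_le_mul h5 (mul_le_mul_of_nonneg_right h6 hgpos.le) (by positivity) one_pos.le
      _ = (|y| + A) * g := one_mul _
  have hsum : ‖Fd a y‖ ≤ (2 * |y| + A) * g := by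
    unfold Fd
    rw [Real.norm_eq_abs]
    calc |(-(2 * u ^ 1 * (E * (2 * y))) / (u ^ 2) ^ 2 * g + (u ^ 2)⁻¹ * ((y - a) * g))|
        ≤ |(-(2 * u ^ 1 * (E * (2 * y))) / (u ^ 2) ^ 2 * g)| + |((u ^ 2)⁻¹ * ((y - a) * g))| :=
          abs_add_le _ _
      _ ≤ |y| * g + (|y| + A) * g := add_le_add hterm1 hterm2
      _ = (2 * |y| + A) * g := by ring
  calc ‖Fd a y‖ ≤ (2 * |y| + A) * g := hsum
    _ ≤ (2 * |y| + A) * gb A y := by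
        apply mul_le_mul_of_nonneg_left (gaussPdf_shift_le A a y ha) (by positivity)

lemma continuous_Fd (a : ℝ) : Continuous (Fd a) := by
  unfold Fd
  apply Continuous.add
  · apply Continuous.mul
    · apply Continuous.div
      · fun_prop
      · fun_prop
      · intro y; positivity
    · exact continuous_gaussPdf.comp (continuous_id.sub continuous_const)
  · apply Continuous.mul
    · apply Continuous.inv₀
      · fun_prop
      · intro y; positivity
    · exact (continuous_id.sub continuous_const).mul
        (continuous_gaussPdf.comp (continuous_id.sub continuous_const))

lemma integrable_bound (A : ℝ) : Integrable (fun y : ℝ => (2 * |y| + A) * gb A y) := by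
  have h1 : Integrable (fun y : ℝ => |y| * Real.exp (-(4:ℝ)⁻¹ * y ^ 2)) := by
    have h := (integrable_mul_exp_neg_mul_sq (b := (4:ℝ)⁻¹) (by norm_num)).abs
    have heq : (fun y : ℝ => |y * Real.exp (-(4:ℝ)⁻¹ * y ^ 2)|)
        = fun y : ℝ => |y| * Real.exp (-(4:ℝ)⁻¹ * y ^ 2) := by
      funext y; rw [abs_mul, abs_of_pos (Real.exp_pos _)]
    rwa [heq] at h
  have h2 : Integrable (fun y : ℝ => Real.exp (-(4:ℝ)⁻¹ * y ^ 2)) :=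
    integrable_exp_neg_mul_sq (by norm_num)
  have heq : (fun y : ℝ => (2 * |y| + A) * gb A y)
      = fun y : ℝ =>
        (2 * ((Real.sqrt (2 * Real.pi))⁻¹ * Real.exp (A ^ 2 / 2)))
          * (|y| * Real.exp (-(4:ℝ)⁻¹ * y ^ 2))
        + (A * ((Real.sqrt (2 * Real.pi))⁻¹ * Real.exp (A ^ 2 / 2)))
          * Real.exp (-(4:ℝ)⁻¹ * y ^ 2) := by
    funext y; unfold gb; ring
  rw [heq]
  exact (h1.const_mul _).add (h2.const_mul _)

lemma hasDerivAt_ρ (a₀ : ℝ) : HasDerivAt ρ (∫ y : ℝ, Fd a₀ y) a₀ := by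
  have hρ : ρ = fun a => ∫ y : ℝ, Fint a y := by
    funext a; exact ρ_eq a
  rw [hρ]
  set A := |a₀| + 1 with hA
  have hA0 : 0 ≤ A := by positivity
  have hmain := hasDerivAt_integral_of_dominated_loc_of_deriv_le
    (F := Fint) (F' := Fd) (x₀ := a₀) (s := Metric.ball a₀ 1)
    (bound := fun y => (2 * |y| + A) * gb A y) (Metric.ball_mem_nhds a₀ one_pos)
    (Filter.Eventually.of_forall fun x => (continuous_Fint x).aestronglyMeasurable)
    (integrable_Fint a₀)
    (continuous_Fd a₀).aestronglyMeasurable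
    (Filter.Eventually.of_forall fun y => fun x hx => by
      apply Fd_bound A x y hA0
      have := mem_ball_iff_norm.mp hx
      rw [Real.norm_eq_abs] at this
      calc |x| = |x - a₀ + a₀| := by ring_nf
        _ ≤ |x - a₀| + |a₀| := abs_add_le _ _
        _ ≤ A := by rw [hA]; linarith)
    (integrable_bound A)
    (Filter.Eventually.of_forall fun y => fun x _ => hasDerivAt_Fint y x)
  exact hmain.2

lemma Fd_zero_int : (∫ y : ℝ, Fd 0 y) = 0 := by
  have hd := hasDerivAt_ρ 0
  have hcomp : HasDerivAt (fun x : ℝ => ρ (-x)) ((∫ y : ℝ, Fd 0 y) * (-1)) 0 := by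
    have h1 : HasDerivAt (fun x : ℝ => -x) (-1 : ℝ) 0 := by
      exact (hasDerivAt_id' (0:ℝ)).neg
    have h2 : HasDerivAt ρ (∫ y : ℝ, Fd 0 y) (-(0:ℝ)) := by simpa using hasDerivAt_ρ 0
    exact HasDerivAt.comp 0 h2 h1
  have heq : (fun x : ℝ => ρ (-x)) = ρ := funext fun x => ρ_neg x
  rw [heq] at hcomp
  have := hd.unique hcomp
  linarith

/-- For k > 0 and σ > 0, any maximizer a* of ã ↦ (ã + k/σ)²ρ(ã) over [0, τ*]
satisfies 0 < a* < τ*. -/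
theorem stmt_8 (σ k τstar : ℝ) (hσ : 0 < σ) (hk : 0 < k)
    (hτ0 : 0 ≤ τstar)
    (hτmax : ∀ τ : ℝ, 0 ≤ τ → τ ^ 2 * ρ τ ≤ τstar ^ 2 * ρ τstar) :
    ∀ astar ∈ Set.Icc 0 τstar,
      (∀ a ∈ Set.Icc 0 τstar,
        (a + k / σ) ^ 2 * ρ a ≤ (astar + k / σ) ^ 2 * ρ astar) →
      0 < astar ∧ astar < τstar := by
  intro astar hastar hmax
  obtain ⟨ha0, ha1⟩ := hastar
  set c := k / σ with hc
  have hcpos : 0 < c := div_pos hk hσ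
  set f : ℝ → ℝ := fun a => (a + c) ^ 2 * ρ a with hf_def
  -- τstar > 0
  have hτpos : 0 < τstar := by
    have h1 : 0 < (1:ℝ) ^ 2 * ρ 1 := by simpa using ρ_pos 1
    have h2 := hτmax 1 one_pos.le
    rcases lt_or_eq_of_le hτ0 with h | h
    · exact h
    · exfalso; rw [← h] at h2; simp at h2; linarith
  -- derivative of f at any point
  have hf : ∀ x : ℝ, HasDerivAt f
      (2 * (x + c) * ρ x + (x + c) ^ 2 * (∫ y : ℝ, Fd x y)) x := by
    intro x
    have h1 : HasDerivAt (fun a : ℝ => (a + c) ^ 2) (2 * (x + c)) x := by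
      have := ((hasDerivAt_id' x).add_const c).pow 2
      exact this.congr_deriv (by simp)
    exact h1.mul (hasDerivAt_ρ x)
  constructor
  · -- 0 < astar
    by_contra h
    have h0 : astar = 0 := le_antisymm (not_lt.mp h) ha0
    have hD : HasDerivAt f (2 * c * ρ 0) 0 := by
      have := hf 0
      rw [Fd_zero_int] at this
      simpa using this
    have hDpos : 0 < 2 * c * ρ 0 := by
      have := ρ_pos 0; positivity
    have hpos : ∀ᶠ x in nhdsWithin (0:ℝ) {y | y ≠ 0}, 0 < slope f 0 x :=
      (hasDerivAt_iff_tendsto_slope.mp hD).eventually (eventually_gt_nhds hDpos)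
    have hmem : Set.Ioo (0:ℝ) τstar ∈ nhdsWithin (0:ℝ) (Set.Ioi 0) :=
      Ioo_mem_nhdsGT hτpos
    have hmono : nhdsWithin (0:ℝ) (Set.Ioi 0) ≤ nhdsWithin (0:ℝ) {y | y ≠ 0} :=
      nhdsWithin_mono _ (fun x hx => ne_of_gt hx)
    have hev : ∀ᶠ x in nhdsWithin (0:ℝ) (Set.Ioi 0),
        0 < slope f 0 x ∧ x ∈ Set.Ioo (0:ℝ) τstar :=
      (hpos.filter_mono hmono).and (Filter.eventually_of_mem hmem (fun x hx => hx))
    obtain ⟨x, hx1, hx2⟩ := hev.exists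
    have hfx := hmax x ⟨hx2.1.le, hx2.2.le⟩
    rw [h0] at hfx
    rw [slope_def_field] at hx1
    have hxpos : 0 < x := hx2.1
    rw [sub_zero] at hx1
    have : 0 < f x - f 0 := by
      rcases div_pos_iff.mp hx1 with ⟨h1, _⟩ | ⟨_, h2⟩
      · exact h1
      · linarith
    have hfx' : f x ≤ f 0 := by simpa [hf_def] using hfx
    linarith
  · -- astar < τstar
    by_contra h
    have hts : astar = τstar := le_antisymm ha1 (not_lt.mp h)
    have hg : HasDerivAt (fun τ : ℝ => τ ^ 2 * ρ τ)
        (2 * τstar * ρ τstar + τstar ^ 2 * (∫ y : ℝ, Fd τstar y)) τstar := by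
      have h1 : HasDerivAt (fun τ : ℝ => τ ^ 2) (2 * τstar) τstar := by
        simpa using hasDerivAt_pow 2 τstar
      exact h1.mul (hasDerivAt_ρ τstar)
    have hgmax : IsLocalMax (fun τ : ℝ => τ ^ 2 * ρ τ) τstar := by
      apply Filter.Eventually.of_forall
      intro τ
      rcases le_or_gt 0 τ with h' | h'
      · exact hτmax τ h'
      · have := hτmax (-τ) (by linarith)
        simpa [ρ_neg, neg_pow] using this
    have hzero := hgmax.hasDerivAt_eq_zero hg
    set d := (∫ y : ℝ, Fd τstar y) with hd_def
    have hρs := ρ_pos τstar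
    have hD := hf τstar
    have hDneg : 2 * (τstar + c) * ρ τstar + (τstar + c) ^ 2 * d < 0 := by
      have hτne : τstar ≠ 0 := ne_of_gt hτpos
      have key : τstar ^ 2 * (2 * (τstar + c) * ρ τstar + (τstar + c) ^ 2 * d)
          = -(2 * τstar * ρ τstar) * c * (τstar + c) := by
        linear_combination (τstar + c) ^ 2 * hzero
      have hlt : τstar ^ 2 * (2 * (τstar + c) * ρ τstar + (τstar + c) ^ 2 * d) < 0 := by
        rw [key]
        have hpos1 : 0 < 2 * τstar * ρ τstar * c * (τstar + c) := by positivity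
        nlinarith
      nlinarith [mul_pos hτpos hτpos, sq_nonneg τstar]
    have hneg : ∀ᶠ x in nhdsWithin τstar {y | y ≠ τstar}, slope f τstar x < 0 :=
      (hasDerivAt_iff_tendsto_slope.mp hD).eventually (eventually_lt_nhds hDneg)
    have hmem : Set.Ioo (0:ℝ) τstar ∈ nhdsWithin τstar (Set.Iio τstar) :=
      Ioo_mem_nhdsLT hτpos
    have hmono : nhdsWithin τstar (Set.Iio τstar) ≤ nhdsWithin τstar {y | y ≠ τstar} :=
      nhdsWithin_mono _ (fun x hx => ne_of_lt hx)
    have hev : ∀ᶠ x in nhdsWithin τstar (Set.Iio τstar),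
        slope f τstar x < 0 ∧ x ∈ Set.Ioo (0:ℝ) τstar :=
      (hneg.filter_mono hmono).and (Filter.eventually_of_mem hmem (fun x hx => hx))
    obtain ⟨x, hx1, hx2⟩ := hev.exists
    have hfx := hmax x ⟨hx2.1.le, hx2.2.le⟩
    rw [hts] at hfx
    rw [slope_def_field] at hx1
    have hxlt : x - τstar < 0 := by linarith [hx2.2]
    have : 0 < f x - f τstar := by
      rcases div_neg_iff.mp hx1 with ⟨h1, h2⟩ | ⟨h1, h2⟩
      · linarith
      · linarith
    have hfx' : f x ≤ f τstar := by simpa [hf_def] using hfx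
    linarith
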